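/- Let d be a squarefree integer with d ≠ 1 and d ≢ 1 (mod 4), and consider the ring ℤ[√d] (a free ℤ-module with basis {1, √d}). Let σ and τ be two distinct ring endomorphisms of ℤ[√d], let D : ℤ[√d] → ℤ[√d] be a (σ,τ)-derivation, and write D(√d) = c₀ + c₁√d with c₀, c₁ ∈ ℤ. Then D is inner if and only if 2d divides c₀ and 2 divides c₁. -/

import Mathlib

open Zsqrtd

lemma my_decomp {d : ℤ} (x : Zsqrtd d) :
    x = x.re • (1 : Zsqrtd d) + x.im • (sqrtd : Zsqrtd d) := by
  ext <;> simp

lemma my_hom_sqrtd {d : ℤ} (hsf : Squarefree d) (hd1 : d ≠ 1)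
    (σ : Zsqrtd d →+* Zsqrtd d) :
    σ sqrtd = sqrtd ∨ σ sqrtd = -sqrtd := by
  have hd0 : d ≠ 0 := hsf.ne_zero
  have hsq : σ sqrtd * σ sqrtd = (d : Zsqrtd d) := by
    rw [← map_mul, dmuld, map_intCast]
  set a := (σ sqrtd).re with ha
  set b := (σ sqrtd).im with hb
  have h1 : a * a + d * b * b = d := by
    have := congrArg Zsqrtd.re hsq; simpa [Zsqrtd.re_mul] using this
  have h2 : a * b + b * a = 0 := by
    have := congrArg Zsqrtd.im hsq; simpa [Zsqrtd.im_mul] using this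
  have hab : a = 0 ∨ b = 0 := by
    rcases mul_eq_zero.mp (by linarith : a * b = 0) with h | h
    · exact Or.inl h
    · exact Or.inr h
  rcases hab with h | h
  · have hbb : b * b = 1 := by
      have : d * (b * b) = d * 1 := by rw [mul_one]; nlinarith
      exact mul_left_cancel₀ hd0 this
    have : b = 1 ∨ b = -1 := Int.isUnit_iff.mp (IsUnit.of_mul_eq_one _ hbb)
    rcases this with h' | h'
    · left; ext <;> simp [← ha, ← hb, h, h']
    · right; ext <;> simp [← ha, ← hb, h, h']
  · exfalso
    have had : a * a = d := by rw [h] at h1; simpa using h1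
    have : IsUnit a := hsf a (had ▸ dvd_refl _)
    rcases Int.isUnit_iff.mp this with h' | h' <;> rw [h'] at had <;> omega

theorem stmt7 (d : ℤ) (hsf : Squarefree d) (hd1 : d ≠ 1) (hmod : d % 4 ≠ 1)
    (σ τ : Zsqrtd d →+* Zsqrtd d) (hστ : σ ≠ τ)
    (D : Zsqrtd d →ₗ[ℤ] Zsqrtd d)
    (hD : ∀ x y : Zsqrtd d, D (x * y) = D x * τ y + σ x * D y)
    (c₀ c₁ : ℤ) (hc : D Zsqrtd.sqrtd = ⟨c₀, c₁⟩) :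
    (∃ β : Zsqrtd d, ∀ x : Zsqrtd d, D x = β * (τ x - σ x)) ↔
      ((2 * d) ∣ c₀ ∧ (2 : ℤ) ∣ c₁) := by
  have hd0 : d ≠ 0 := hsf.ne_zero
  have hD1 : D 1 = 0 := by
    have h := hD 1 1
    simp only [mul_one, map_one, one_mul] at h
    exact left_eq_add.mp h
  -- decomposition of D
  have hDx : ∀ x : Zsqrtd d, D x = x.im • D sqrtd := by
    intro x
    conv_lhs => rw [my_decomp x]
    rw [map_add, map_zsmul, map_zsmul, hD1, smul_zero, zero_add]
  -- τ x - σ x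
  have hts : ∀ x : Zsqrtd d, τ x - σ x = x.im • (τ sqrtd - σ sqrtd) := by
    intro x
    conv_lhs => rw [my_decomp x]
    simp only [map_add, map_zsmul, map_one, smul_sub]
    ring
  -- reduce inner to single equation
  have hred : (∃ β : Zsqrtd d, ∀ x : Zsqrtd d, D x = β * (τ x - σ x)) ↔
      ∃ β : Zsqrtd d, D sqrtd = β * (τ sqrtd - σ sqrtd) := by
    constructor
    · rintro ⟨β, hβ⟩; exact ⟨β, hβ sqrtd⟩
    · rintro ⟨β, hβ⟩
      refine ⟨β, fun x => ?_⟩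
      rw [hDx x, hts x, hβ, mul_smul_comm]
  rw [hred]
  -- classify σ τ
  have hne : σ sqrtd ≠ τ sqrtd := fun h => hστ (hom_ext σ τ h)
  have key : ∀ t : ℤ, (t = 2 ∨ t = -2) →
      ((∃ β : Zsqrtd d, (⟨c₀, c₁⟩ : Zsqrtd d) = β * ⟨0, t⟩) ↔
        ((2 * d) ∣ c₀ ∧ (2 : ℤ) ∣ c₁)) := by
    intro t ht
    constructor
    · rintro ⟨β, hβ⟩
      have h0 : c₀ = d * β.im * t := by
        have := congrArg Zsqrtd.re hβ; simpa [Zsqrtd.re_mul] using this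
      have h1 : c₁ = β.re * t := by
        have := congrArg Zsqrtd.im hβ; simpa [Zsqrtd.im_mul] using this
      rcases ht with rfl | rfl
      · exact ⟨⟨β.im, by rw [h0]; ring⟩, ⟨β.re, by rw [h1]; ring⟩⟩
      · exact ⟨⟨-β.im, by rw [h0]; ring⟩, ⟨-β.re, by rw [h1]; ring⟩⟩
    · rintro ⟨⟨k, hk⟩, ⟨m, hm⟩⟩
      rcases ht with rfl | rfl
      · exact ⟨⟨m, k⟩, by ext <;> simp [Zsqrtd.re_mul, Zsqrtd.im_mul, hk, hm] <;> ring⟩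
      · exact ⟨⟨-m, -k⟩, by ext <;> simp [Zsqrtd.re_mul, Zsqrtd.im_mul, hk, hm] <;> ring⟩
  rcases my_hom_sqrtd hsf hd1 σ with hσ | hσ <;>
    rcases my_hom_sqrtd hsf hd1 τ with hτ | hτ
  · exact absurd (hσ.trans hτ.symm) hne
  · have he : τ sqrtd - σ sqrtd = (⟨0, -2⟩ : Zsqrtd d) := by
      rw [hσ, hτ]; ext <;> simp
    rw [hc, he]
    exact key (-2) (Or.inr rfl)
  · have he : τ sqrtd - σ sqrtd = (⟨0, 2⟩ : Zsqrtd d) := by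
      rw [hσ, hτ]; ext <;> simp
    rw [hc, he]
    exact key 2 (Or.inl rfl)
  · exact absurd (hσ.trans hτ.symm) hne
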